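/- Let H ≤ G1 × G2 × G3 be a subgroup such that there exists (π1, π2, π3) ∉ H with: (π1, π2, π3) extendable in each single coordinate, i.e., there exist τ ∈ G1 with (τ, π2, π3) ∈ H, τ ∈ G2 with (π1, τ, π3) ∈ H, and τ ∈ G3 with (π1, π2, τ) ∈ H. Define S1 = {τ1 ∈ G1 : (∃τ, (τ1, τ, 1) ∈ H) ∧ (∃τ, (τ1, 1, τ) ∈ H)} and analogously S2, S3, and R = H ∩ (S1 × S2 × S3). Then S1, S2, S3 are subgroups, and R is an almost-direct product of S1, S2, S3, i.e., R ≠ S1 × S2 × S3 and for each coordinate, any pair of elements of the other two Si's extends to a triple in R. -/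

import Mathlib

/-- Proposition 1 (construction): given a subgroup `H ≤ G1 × G2 × G3` and a
(2,3)-anomaly triple `(π1, π2, π3) ∉ H` that is correctable in each single
coordinate, the sets `S1, S2, S3` are subgroups and
`R = H ∩ (S1 × S2 × S3)` is an almost-direct product of `S1, S2, S3`. -/
theorem anomaly_gives_almost_direct_product
    {G1 G2 G3 : Type*} [Group G1] [Group G2] [Group G3]
    [Finite G1] [Finite G2] [Finite G3]
    (H : Subgroup (G1 × G2 × G3)) (π1 : G1) (π2 : G2) (π3 : G3)
    (hnot : ((π1, π2, π3) : G1 × G2 × G3) ∉ H)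
    (e1 : ∃ τ : G1, ((τ, π2, π3) : G1 × G2 × G3) ∈ H)
    (e2 : ∃ τ : G2, ((π1, τ, π3) : G1 × G2 × G3) ∈ H)
    (e3 : ∃ τ : G3, ((π1, π2, τ) : G1 × G2 × G3) ∈ H) :
    let S1 : Set G1 := {t | (∃ τ : G2, ((t, τ, 1) : G1 × G2 × G3) ∈ H) ∧
      (∃ τ : G3, ((t, 1, τ) : G1 × G2 × G3) ∈ H)}
    let S2 : Set G2 := {t | (∃ τ : G1, ((τ, t, 1) : G1 × G2 × G3) ∈ H) ∧
      (∃ τ : G3, ((1, t, τ) : G1 × G2 × G3) ∈ H)}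
    let S3 : Set G3 := {t | (∃ τ : G1, ((τ, 1, t) : G1 × G2 × G3) ∈ H) ∧
      (∃ τ : G2, ((1, τ, t) : G1 × G2 × G3) ∈ H)}
    let R : Set (G1 × G2 × G3) :=
      {x | x ∈ H ∧ x.1 ∈ S1 ∧ x.2.1 ∈ S2 ∧ x.2.2 ∈ S3}
    (∃ K : Subgroup G1, (K : Set G1) = S1) ∧
    (∃ K : Subgroup G2, (K : Set G2) = S2) ∧
    (∃ K : Subgroup G3, (K : Set G3) = S3) ∧
    R ≠ {x : G1 × G2 × G3 | x.1 ∈ S1 ∧ x.2.1 ∈ S2 ∧ x.2.2 ∈ S3} ∧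
    (∀ b ∈ S2, ∀ c ∈ S3, ∃ a ∈ S1, ((a, b, c) : G1 × G2 × G3) ∈ R) ∧
    (∀ a ∈ S1, ∀ c ∈ S3, ∃ b ∈ S2, ((a, b, c) : G1 × G2 × G3) ∈ R) ∧
    (∀ a ∈ S1, ∀ b ∈ S2, ∃ c ∈ S3, ((a, b, c) : G1 × G2 × G3) ∈ R) := by
  intro S1 S2 S3 R
  obtain ⟨τ, hτ⟩ := e1
  obtain ⟨σ, hσ⟩ := e2
  obtain ⟨ρ, hρ⟩ := e3
  refine ⟨?_, ?_, ?_, ?_, ?_, ?_, ?_⟩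
  · -- S1 is a subgroup
    refine ⟨{ carrier := S1, one_mem' := ?_, mul_mem' := ?_, inv_mem' := ?_ }, rfl⟩
    · rintro a b ⟨⟨x, hx⟩, ⟨y, hy⟩⟩ ⟨⟨x', hx'⟩, ⟨y', hy'⟩⟩
      exact ⟨⟨x * x', by simpa using H.mul_mem hx hx'⟩,
             ⟨y * y', by simpa using H.mul_mem hy hy'⟩⟩
    · exact ⟨⟨1, H.one_mem⟩, ⟨1, H.one_mem⟩⟩
    · rintro a ⟨⟨x, hx⟩, ⟨y, hy⟩⟩
      exact ⟨⟨x⁻¹, by simpa using H.inv_mem hx⟩, ⟨y⁻¹, by simpa using H.inv_mem hy⟩⟩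
  · -- S2 is a subgroup
    refine ⟨{ carrier := S2, one_mem' := ?_, mul_mem' := ?_, inv_mem' := ?_ }, rfl⟩
    · rintro a b ⟨⟨x, hx⟩, ⟨y, hy⟩⟩ ⟨⟨x', hx'⟩, ⟨y', hy'⟩⟩
      exact ⟨⟨x * x', by simpa using H.mul_mem hx hx'⟩,
             ⟨y * y', by simpa using H.mul_mem hy hy'⟩⟩
    · exact ⟨⟨1, H.one_mem⟩, ⟨1, H.one_mem⟩⟩
    · rintro a ⟨⟨x, hx⟩, ⟨y, hy⟩⟩
      exact ⟨⟨x⁻¹, by simpa using H.inv_mem hx⟩, ⟨y⁻¹, by simpa using H.inv_mem hy⟩⟩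
  · -- S3 is a subgroup
    refine ⟨{ carrier := S3, one_mem' := ?_, mul_mem' := ?_, inv_mem' := ?_ }, rfl⟩
    · rintro a b ⟨⟨x, hx⟩, ⟨y, hy⟩⟩ ⟨⟨x', hx'⟩, ⟨y', hy'⟩⟩
      exact ⟨⟨x * x', by simpa using H.mul_mem hx hx'⟩,
             ⟨y * y', by simpa using H.mul_mem hy hy'⟩⟩
    · exact ⟨⟨1, H.one_mem⟩, ⟨1, H.one_mem⟩⟩
    · rintro a ⟨⟨x, hx⟩, ⟨y, hy⟩⟩
      exact ⟨⟨x⁻¹, by simpa using H.inv_mem hx⟩, ⟨y⁻¹, by simpa using H.inv_mem hy⟩⟩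
  · -- R ≠ S1 × S2 × S3
    have hxy : ((τ * π1⁻¹, π2 * σ⁻¹, 1) : G1 × G2 × G3) ∈ H := by
      simpa using H.mul_mem hτ (H.inv_mem hσ)
    have hxz : ((τ * π1⁻¹, 1, π3 * ρ⁻¹) : G1 × G2 × G3) ∈ H := by
      simpa using H.mul_mem hτ (H.inv_mem hρ)
    have hyz : ((1, σ * π2⁻¹, π3 * ρ⁻¹) : G1 × G2 × G3) ∈ H := by
      simpa using H.mul_mem hσ (H.inv_mem hρ)
    have hyz' : ((1, π2 * σ⁻¹, ρ * π3⁻¹) : G1 × G2 × G3) ∈ H := by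
      simpa using H.inv_mem hyz
    intro heq
    have hmem : ((τ * π1⁻¹, π2 * σ⁻¹, π3 * ρ⁻¹) : G1 × G2 × G3) ∈ R := by
      rw [heq]
      exact ⟨⟨⟨π2 * σ⁻¹, hxy⟩, ⟨π3 * ρ⁻¹, hxz⟩⟩,
             ⟨⟨τ * π1⁻¹, hxy⟩, ⟨ρ * π3⁻¹, hyz'⟩⟩,
             ⟨⟨τ * π1⁻¹, hxz⟩, ⟨σ * π2⁻¹, hyz⟩⟩⟩
    have h : ((τ * π1⁻¹, π2 * σ⁻¹, π3 * ρ⁻¹) : G1 × G2 × G3) ∈ H := hmem.1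
    have h2 : ((π1⁻¹, σ⁻¹, ρ⁻¹) : G1 × G2 × G3) ∈ H := by
      simpa using H.mul_mem (H.inv_mem hτ) h
    have h3 : ((π1, σ, ρ) : G1 × G2 × G3) ∈ H := by
      simpa using H.inv_mem h2
    have h4 : ((1, π2 * σ⁻¹, 1) : G1 × G2 × G3) ∈ H := by
      simpa using H.mul_mem hρ (H.inv_mem h3)
    exact hnot (by simpa using H.mul_mem h4 hσ)
  · -- extend in first coordinate
    rintro b ⟨⟨u, hu⟩, ⟨w, hw⟩⟩ c ⟨⟨v, hv⟩, ⟨m, hm⟩⟩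
    have hvm : ((v, m⁻¹, 1) : G1 × G2 × G3) ∈ H := by
      simpa using H.mul_mem hv (H.inv_mem hm)
    have huw : ((u, 1, w⁻¹) : G1 × G2 × G3) ∈ H := by
      simpa using H.mul_mem hu (H.inv_mem hw)
    refine ⟨u * v, ⟨⟨b * m⁻¹, by simpa using H.mul_mem hu hvm⟩,
      ⟨w⁻¹ * c, by simpa using H.mul_mem huw hv⟩⟩,
      by simpa using H.mul_mem hu hv, ?_, ⟨⟨u, hu⟩, ⟨w, hw⟩⟩, ⟨⟨v, hv⟩, ⟨m, hm⟩⟩⟩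
    exact ⟨⟨b * m⁻¹, by simpa using H.mul_mem hu hvm⟩,
      ⟨w⁻¹ * c, by simpa using H.mul_mem huw hv⟩⟩
  · -- extend in second coordinate
    rintro a ⟨⟨u, hu⟩, ⟨w, hw⟩⟩ c ⟨⟨v, hv⟩, ⟨m, hm⟩⟩
    have hvm : ((v⁻¹, m, 1) : G1 × G2 × G3) ∈ H := by
      simpa using H.mul_mem (H.inv_mem hv) hm
    have huw : ((1, u, w⁻¹) : G1 × G2 × G3) ∈ H := by
      simpa using H.mul_mem (H.inv_mem hw) hu
    have hb : (u * m) ∈ S2 :=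
      ⟨⟨a * v⁻¹, by simpa using H.mul_mem hu hvm⟩,
       ⟨w⁻¹ * c, by simpa using H.mul_mem huw hm⟩⟩
    exact ⟨u * m, hb, by simpa using H.mul_mem hu hm, ⟨⟨u, hu⟩, ⟨w, hw⟩⟩, hb,
      ⟨⟨v, hv⟩, ⟨m, hm⟩⟩⟩
  · -- extend in third coordinate
    rintro a ⟨⟨u, hu⟩, ⟨w, hw⟩⟩ b ⟨⟨v, hv⟩, ⟨m, hm⟩⟩
    have hvm : ((v⁻¹, 1, m) : G1 × G2 × G3) ∈ H := by
      simpa using H.mul_mem (H.inv_mem hv) hm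
    have huw : ((1, u⁻¹, w) : G1 × G2 × G3) ∈ H := by
      simpa using H.inv_mem (H.mul_mem (H.inv_mem hw) hu)
    have hc : (w * m) ∈ S3 :=
      ⟨⟨a * v⁻¹, by simpa using H.mul_mem hw hvm⟩,
       ⟨u⁻¹ * b, by simpa using H.mul_mem huw hm⟩⟩
    exact ⟨w * m, hc, by simpa using H.mul_mem hw hm, ⟨⟨u, hu⟩, ⟨w, hw⟩⟩,
      ⟨⟨v, hv⟩, ⟨m, hm⟩⟩, hc⟩
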